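/- Let (Ω, F, P) be a probability space, and fix constants p > 1 and κ > 0. Let D_{p,κ} denote the set of probability measures Q on (Ω, F) that admit a density with respect to P, i.e. Q = X·P for some nonnegative F-measurable random variable X, with E_P[X^p] ≤ κ. Then D_{p,κ}, endowed with the total variation distance, is a complete metric space: every sequence (Q_n) in D_{p,κ} that is Cauchy for the total variation distance converges in total variation to some probability measure Q belonging to D_{p,κ}. -/

import Mathlib

open MeasureTheory Filter
open scoped ENNReal

/-- Total variation distance `d(μ,ν) = 2 ⨆_{A measurable} |μ(A) − ν(A)|`. -/
noncomputable def tvDist {Ω : Type*} [MeasurableSpace Ω] (μ ν : Measure Ω) : ℝ :=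
  2 * ⨆ A : {s : Set Ω // MeasurableSet s}, |(μ A.1).toReal - (ν A.1).toReal|

lemma tv_bdd {Ω : Type*} [MeasurableSpace Ω] (μ ν : Measure Ω)
    [IsProbabilityMeasure μ] [IsProbabilityMeasure ν] :
    BddAbove (Set.range fun A : {s : Set Ω // MeasurableSet s} =>
      |(μ A.1).toReal - (ν A.1).toReal|) := by
  refine ⟨2, fun x hx => ?_⟩
  obtain ⟨A, rfl⟩ := hx
  have h1 : (μ A.1).toReal ≤ 1 := by
    have := prob_le_one (μ := μ) (s := A.1)
    simpa using ENNReal.toReal_mono ENNReal.one_ne_top this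
  have h2 : (ν A.1).toReal ≤ 1 := by
    have := prob_le_one (μ := ν) (s := A.1)
    simpa using ENNReal.toReal_mono ENNReal.one_ne_top this
  have h3 : 0 ≤ (μ A.1).toReal := ENNReal.toReal_nonneg
  have h4 : 0 ≤ (ν A.1).toReal := ENNReal.toReal_nonneg
  rw [abs_le]; constructor <;> linarith

lemma tv_nonneg {Ω : Type*} [MeasurableSpace Ω] (μ ν : Measure Ω) : 0 ≤ tvDist μ ν := by
  have : (0:ℝ) ≤ ⨆ A : {s : Set Ω // MeasurableSet s}, |(μ A.1).toReal - (ν A.1).toReal| :=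
    Real.iSup_nonneg fun A => abs_nonneg _
  unfold tvDist; linarith

lemma tv_le {Ω : Type*} [MeasurableSpace Ω] (μ ν : Measure Ω) {c : ℝ} (hc : 0 ≤ c)
    (h : ∀ A : Set Ω, MeasurableSet A → |(μ A).toReal - (ν A).toReal| ≤ c) :
    tvDist μ ν ≤ 2 * c := by
  unfold tvDist
  have := Real.iSup_le (f := fun A : {s : Set Ω // MeasurableSet s} =>
    |(μ A.1).toReal - (ν A.1).toReal|) (fun A => h A.1 A.2) hc
  linarith

lemma tv_ge {Ω : Type*} [MeasurableSpace Ω] (μ ν : Measure Ω)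
    [IsProbabilityMeasure μ] [IsProbabilityMeasure ν]
    {A : Set Ω} (hA : MeasurableSet A) :
    ((μ A).toReal - (ν A).toReal) + ((ν Aᶜ).toReal - (μ Aᶜ).toReal) ≤ tvDist μ ν := by
  have h1 : (μ A).toReal - (ν A).toReal ≤
      ⨆ B : {s : Set Ω // MeasurableSet s}, |(μ B.1).toReal - (ν B.1).toReal| :=
    le_trans (le_abs_self _) (le_ciSup (tv_bdd μ ν) ⟨A, hA⟩)
  have h2 : (ν Aᶜ).toReal - (μ Aᶜ).toReal ≤
      ⨆ B : {s : Set Ω // MeasurableSet s}, |(μ B.1).toReal - (ν B.1).toReal| := by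
    have := le_ciSup (tv_bdd μ ν) ⟨Aᶜ, hA.compl⟩
    simp only at this
    have h := (neg_le_abs ((μ Aᶜ).toReal - (ν Aᶜ).toReal)).trans this
    linarith [h]
  unfold tvDist; linarith

/-- The set `D_{p,κ}` of probability measures with a density `X` w.r.t. `P`
satisfying `E_P[X^p] ≤ κ` is complete for the total variation distance. -/
theorem complete_D_p_kappa {Ω : Type*} [MeasurableSpace Ω]
    (P : Measure Ω) [IsProbabilityMeasure P]
    (p κ : ℝ) (hp : 1 < p) (hκ : 0 < κ)
    (Q : ℕ → Measure Ω) (X : ℕ → Ω → ℝ≥0∞)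
    (hQprob : ∀ n, IsProbabilityMeasure (Q n))
    (hXmeas : ∀ n, Measurable (X n))
    (hdens : ∀ n, Q n = P.withDensity (X n))
    (hXp : ∀ n, ∫⁻ ω, (X n ω) ^ p ∂P ≤ ENNReal.ofReal κ)
    (hCauchy : ∀ ε : ℝ, 0 < ε → ∃ N : ℕ, ∀ m ≥ N, ∀ n ≥ N, tvDist (Q m) (Q n) ≤ ε) :
    ∃ (Qlim : Measure Ω) (Xlim : Ω → ℝ≥0∞),
      IsProbabilityMeasure Qlim ∧
      Measurable Xlim ∧
      Qlim = P.withDensity Xlim ∧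
      (∫⁻ ω, (Xlim ω) ^ p ∂P ≤ ENNReal.ofReal κ) ∧
      Tendsto (fun n => tvDist (Q n) Qlim) atTop (nhds 0) := by
  haveI : ∀ n, IsProbabilityMeasure (Q n) := hQprob
  -- basic facts about the densities
  set g : ℕ → Ω → ℝ := fun n ω => (X n ω).toReal with hg
  have hgdef : ∀ n ω, g n ω = (X n ω).toReal := fun _ _ => rfl
  have hgmeas : ∀ n, Measurable (g n) := fun n => (hXmeas n).ennreal_toReal
  have hX1 : ∀ n, ∫⁻ ω, X n ω ∂P = 1 := by
    intro n
    have h := (hQprob n).measure_univ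
    rw [hdens n, withDensity_apply _ MeasurableSet.univ, Measure.restrict_univ] at h
    exact h
  have hfin : ∀ n, ∀ᵐ ω ∂P, X n ω < ∞ := fun n =>
    ae_lt_top (hXmeas n) (by rw [hX1 n]; exact ENNReal.one_ne_top)
  have hgint : ∀ n, Integrable (g n) P := fun n =>
    integrable_toReal_of_lintegral_ne_top (hXmeas n).aemeasurable
      (by rw [hX1 n]; exact ENNReal.one_ne_top)
  have hgnonneg : ∀ n ω, 0 ≤ g n ω := fun n ω => ENNReal.toReal_nonneg
  have hgi1 : ∀ n, ∫ ω, g n ω ∂P = 1 := by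
    intro n
    rw [hg]
    rw [integral_toReal (hXmeas n).aemeasurable (hfin n), hX1 n, ENNReal.toReal_one]
  -- measure of a set as an integral of the density
  have hQA : ∀ n, ∀ A : Set Ω, MeasurableSet A →
      (Q n A).toReal = ∫ ω in A, g n ω ∂P := by
    intro n A hA
    rw [hdens n, withDensity_apply _ hA,
      ← integral_toReal ((hXmeas n).aemeasurable.restrict) (ae_restrict_of_ae (hfin n))]
  -- L¹ distance is bounded by the TV distance
  have key_lower : ∀ m n, ∫ ω, |g m ω - g n ω| ∂P ≤ tvDist (Q m) (Q n) := by
    intro m n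
    set A : Set Ω := {ω | g n ω ≤ g m ω} with hAdef
    have hA : MeasurableSet A := measurableSet_le (hgmeas n) (hgmeas m)
    have hsub : Integrable (fun ω => g m ω - g n ω) P := (hgint m).sub (hgint n)
    have h1 : ∫ ω in A, |g m ω - g n ω| ∂P = ∫ ω in A, (g m ω - g n ω) ∂P := by
      refine setIntegral_congr_fun hA fun ω hω => ?_
      exact abs_of_nonneg (sub_nonneg.2 hω)
    have h2 : ∫ ω in Aᶜ, |g m ω - g n ω| ∂P = ∫ ω in Aᶜ, (g n ω - g m ω) ∂P := by
      refine setIntegral_congr_fun hA.compl fun ω hω => ?_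
      have : g m ω < g n ω := lt_of_not_ge hω
      rw [abs_of_neg (by linarith)]; ring
    have hsplit : ∫ ω, |g m ω - g n ω| ∂P =
        ∫ ω in A, |g m ω - g n ω| ∂P + ∫ ω in Aᶜ, |g m ω - g n ω| ∂P :=
      (integral_add_compl hA hsub.abs).symm
    have e1 : ∫ ω in A, (g m ω - g n ω) ∂P
        = (Q m A).toReal - (Q n A).toReal := by
      rw [integral_sub ((hgint m).restrict) ((hgint n).restrict), hQA m A hA, hQA n A hA]
    have e2 : ∫ ω in Aᶜ, (g n ω - g m ω) ∂P
        = (Q n Aᶜ).toReal - (Q m Aᶜ).toReal := by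
      rw [integral_sub ((hgint n).restrict) ((hgint m).restrict),
        hQA m Aᶜ hA.compl, hQA n Aᶜ hA.compl]
    have := tv_ge (Q m) (Q n) hA
    rw [hsplit, h1, h2, e1, e2]
    linarith
  -- set up the L¹ space machinery
  have hmem : ∀ n, MemLp (g n) 1 P := fun n => (memLp_one_iff_integrable).2 (hgint n)
  set F : ℕ → (Ω →₁[P] ℝ) := fun n => (hmem n).toLp (g n) with hF
  have hFdef : ∀ n, F n = (hmem n).toLp (g n) := fun _ => rfl
  have hnorm : ∀ m n, ‖F m - F n‖ = ∫ ω, |g m ω - g n ω| ∂P := by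
    intro m n
    rw [L1.norm_eq_integral_norm]
    refine integral_congr_ae ?_
    filter_upwards [Lp.coeFn_sub (F m) (F n), (hmem m).coeFn_toLp, (hmem n).coeFn_toLp]
      with ω h1 h2 h3
    rw [Real.norm_eq_abs, h1, Pi.sub_apply, hF]
    rw [h2, h3]
  -- F is Cauchy, hence has a limit G in L¹
  have hcs : CauchySeq F := by
    rw [Metric.cauchySeq_iff]
    intro ε hε
    obtain ⟨N, hN⟩ := hCauchy (ε/2) (by linarith)
    refine ⟨N, fun m hm n hn => ?_⟩
    rw [dist_eq_norm, hnorm m n]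
    calc ∫ ω, |g m ω - g n ω| ∂P ≤ tvDist (Q m) (Q n) := key_lower m n
      _ ≤ ε/2 := hN m hm n hn
      _ < ε := by linarith
  obtain ⟨G, hG⟩ := cauchySeq_tendsto_of_complete hcs
  have hGnorm : Tendsto (fun n => ‖F n - G‖) atTop (nhds 0) := by
    have := tendsto_iff_dist_tendsto_zero.mp hG
    simpa [dist_eq_norm] using this
  have hGmeas : Measurable (⇑G : Ω → ℝ) := (Lp.stronglyMeasurable G).measurable
  have hnormG : ∀ n, ‖F n - G‖ = ∫ ω, |g n ω - G ω| ∂P := by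
    intro n
    rw [L1.norm_eq_integral_norm]
    refine integral_congr_ae ?_
    filter_upwards [Lp.coeFn_sub (F n) G, (hmem n).coeFn_toLp] with ω h1 h2
    rw [Real.norm_eq_abs, h1, Pi.sub_apply, hFdef n, h2]
  have heLp : ∀ n, eLpNorm (fun ω => g n ω - G ω) 1 P = ENNReal.ofReal ‖F n - G‖ := by
    intro n
    have hae : (fun ω => g n ω - G ω) =ᵐ[P] ⇑(F n - G) := by
      filter_upwards [Lp.coeFn_sub (F n) G, (hmem n).coeFn_toLp] with ω h1 h2
      rw [h1, Pi.sub_apply, hFdef n, h2]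
    rw [eLpNorm_congr_ae hae, Lp.norm_def,
      ENNReal.ofReal_toReal (Lp.eLpNorm_ne_top _)]
  -- convergence in measure and an a.e. convergent subsequence
  have hTIM : TendstoInMeasure P g atTop (⇑G) := by
    refine tendstoInMeasure_of_tendsto_eLpNorm_of_ne_top one_ne_zero ENNReal.one_ne_top
      (fun n => (hgmeas n).aestronglyMeasurable) (Lp.aestronglyMeasurable G) ?_
    have : Tendsto (fun n => ENNReal.ofReal ‖F n - G‖) atTop (nhds 0) := by
      have := ENNReal.tendsto_ofReal hGnorm
      simpa using this
    refine this.congr fun n => ?_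
    rw [← heLp n]
    rfl
  obtain ⟨ns, hns_mono, hns_ae⟩ := hTIM.exists_seq_tendsto_ae
  -- the limit density
  set Xlim : Ω → ℝ≥0∞ := fun ω => ENNReal.ofReal (G ω) with hXlimdef
  have hXlimmeas : Measurable Xlim := ENNReal.measurable_ofReal.comp hGmeas
  have hGnn : ∀ᵐ ω ∂P, 0 ≤ G ω := by
    filter_upwards [hns_ae] with ω hω
    exact ge_of_tendsto hω (Eventually.of_forall fun k => hgnonneg (ns k) ω)
  have hfinall : ∀ᵐ ω ∂P, ∀ n, X n ω < ∞ := ae_all_iff.2 hfin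
  have hXtend : ∀ᵐ ω ∂P, Tendsto (fun k => X (ns k) ω) atTop (nhds (Xlim ω)) := by
    filter_upwards [hns_ae, hfinall] with ω hω hfω
    have h1 : Tendsto (fun k => ENNReal.ofReal (g (ns k) ω)) atTop (nhds (Xlim ω)) :=
      (ENNReal.continuous_ofReal.tendsto _).comp hω
    refine h1.congr fun k => ?_
    rw [hgdef, ENNReal.ofReal_toReal (hfω (ns k)).ne]
  have hpowtend : ∀ᵐ ω ∂P,
      Tendsto (fun k => (X (ns k) ω) ^ p) atTop (nhds ((Xlim ω) ^ p)) := by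
    filter_upwards [hXtend] with ω hω
    exact (ENNReal.continuous_rpow_const.tendsto _).comp hω
  -- the moment bound
  have hmoment : ∫⁻ ω, (Xlim ω) ^ p ∂P ≤ ENNReal.ofReal κ := by
    have heq : (fun ω => (Xlim ω) ^ p) =ᵐ[P]
        fun ω => liminf (fun k => (X (ns k) ω) ^ p) atTop := by
      filter_upwards [hpowtend] with ω hω
      exact hω.liminf_eq.symm
    calc ∫⁻ ω, (Xlim ω) ^ p ∂P
        = ∫⁻ ω, liminf (fun k => (X (ns k) ω) ^ p) atTop ∂P := lintegral_congr_ae heq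
      _ ≤ liminf (fun k => ∫⁻ ω, (X (ns k) ω) ^ p ∂P) atTop :=
          lintegral_liminf_le fun k => (hXmeas (ns k)).pow_const p
      _ ≤ ENNReal.ofReal κ := by
          refine liminf_le_of_le (by isBoundedDefault) ?_
          intro b hb
          obtain ⟨k, hk⟩ := hb.exists
          exact hk.trans (hXp (ns k))
  -- the limit measure
  have hGint : Integrable (⇑G) P := L1.integrable_coeFn G
  have hGi1 : ∫ ω, G ω ∂P = 1 := by
    have hbound : ∀ n, |∫ ω, G ω ∂P - 1| ≤ ‖F n - G‖ := by
      intro n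
      rw [hnormG n]
      have h1 : ∫ ω, G ω ∂P - 1 = ∫ ω, (G ω - g n ω) ∂P := by
        rw [integral_sub hGint (hgint n), hgi1 n]
      rw [h1]
      calc |∫ ω, (G ω - g n ω) ∂P| ≤ ∫ ω, |G ω - g n ω| ∂P := by
            simpa [Real.norm_eq_abs] using
              norm_integral_le_integral_norm (fun ω => G ω - g n ω) (μ := P)
        _ = ∫ ω, |g n ω - G ω| ∂P := by
            congr 1; funext ω; rw [abs_sub_comm]
    have h0 : |∫ ω, G ω ∂P - 1| ≤ 0 :=
      ge_of_tendsto hGnorm (Eventually.of_forall hbound)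
    have h0' := abs_nonneg (∫ ω, G ω ∂P - 1)
    have : |∫ ω, G ω ∂P - 1| = 0 := le_antisymm h0 h0'
    have := abs_eq_zero.mp this
    linarith
  have hXlim1 : ∫⁻ ω, Xlim ω ∂P = 1 := by
    rw [hXlimdef]
    rw [← ofReal_integral_eq_lintegral_ofReal hGint hGnn, hGi1, ENNReal.ofReal_one]
  set Qlim : Measure Ω := P.withDensity Xlim with hQlimdef
  have hQlimprob : IsProbabilityMeasure Qlim := by
    constructor
    rw [hQlimdef, withDensity_apply _ MeasurableSet.univ, Measure.restrict_univ, hXlim1]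
  have hQlimA : ∀ A : Set Ω, MeasurableSet A → (Qlim A).toReal = ∫ ω in A, G ω ∂P := by
    intro A hA
    rw [hQlimdef, withDensity_apply _ hA]
    rw [← integral_toReal (hXlimmeas.aemeasurable.restrict)
      (ae_restrict_of_ae (Eventually.of_forall fun ω => ENNReal.ofReal_lt_top))]
    refine integral_congr_ae ?_
    filter_upwards [ae_restrict_of_ae hGnn] with ω hω
    exact ENNReal.toReal_ofReal hω
  -- the TV convergence
  have htvle : ∀ n, tvDist (Q n) Qlim ≤ 2 * ‖F n - G‖ := by
    intro n
    refine tv_le _ _ (norm_nonneg _) fun A hA => ?_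
    rw [hQA n A hA, hQlimA A hA, hnormG n]
    have hsub : Integrable (fun ω => g n ω - G ω) P := (hgint n).sub hGint
    calc |∫ ω in A, g n ω ∂P - ∫ ω in A, G ω ∂P|
        = |∫ ω in A, (g n ω - G ω) ∂P| := by
          rw [integral_sub ((hgint n).restrict) (hGint.restrict)]
      _ ≤ ∫ ω in A, |g n ω - G ω| ∂P := by
          simpa [Real.norm_eq_abs] using
            norm_integral_le_integral_norm (fun ω => g n ω - G ω) (μ := P.restrict A)
      _ ≤ ∫ ω, |g n ω - G ω| ∂P :=
          setIntegral_le_integral hsub.abs (Eventually.of_forall fun ω => abs_nonneg _)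
  have hfinal : Tendsto (fun n => tvDist (Q n) Qlim) atTop (nhds 0) := by
    refine squeeze_zero (fun n => tv_nonneg _ _) htvle ?_
    have := hGnorm.const_mul (2:ℝ)
    simpa using this
  exact ⟨Qlim, Xlim, hQlimprob, hXlimmeas, hQlimdef, hmoment, hfinal⟩
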